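/- There is a universal constant δ ≥ 0 such that for every ε > 0 and every metric space (Γ, d) in which distinct points are at distance at least ε, the combinatorial horoball H(Γ) over Γ is δ'-hyperbolic for some δ' depending only on ε. That is, every geodesic triangle in H(Γ) is δ'-thin: each side is contained in the δ'-neighborhood of the union of the other two sides. -/

import Mathlib

open scoped ENNReal Classical

/-- The total length of a chain (finite path) of vertices, where consecutive
vertices are charged according to the edge-weight function `w`. -/
noncomputable def chainCost {V : Type*} (w : V → V → ℝ≥0∞) : List V → ℝ≥0∞
  | [] => 0
  | [_] => 0
  | u :: v :: l => w u v + chainCost w (v :: l)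

/-- The path metric of the weighted graph with edge-weight function `w`. -/
noncomputable def pathDist {V : Type*} (w : V → V → ℝ≥0∞) (u v : V) : ℝ≥0∞ :=
  ⨅ (l : List V) (_ : l.head? = some u) (_ : l.getLast? = some v), chainCost w l

/-- The edge weights of the combinatorial horoball over a metric space `Γ`:
vertical edges of length `1` between `(x,n)` and `(x,n+1)`, horizontal edges of
length `e^{-n}·d(x,y)` between `(x,n)` and `(y,n)` for `x ≠ y`. -/
noncomputable def horoballWeight (Γ : Type*) [MetricSpace Γ] :
    Γ × ℕ → Γ × ℕ → ℝ≥0∞ := fun p q =>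
  if p.1 = q.1 ∧ (q.2 = p.2 + 1 ∨ p.2 = q.2 + 1) then 1
  else if p.2 = q.2 ∧ p.1 ≠ q.1 then
    ENNReal.ofReal (Real.exp (-(p.2 : ℝ)) * dist p.1 q.1)
  else ⊤

namespace HoroballProof

variable {Γ : Type*} [MetricSpace Γ]

/-- The Bonk–Schramm style comparison quantity. -/
noncomputable def acost (p q : Γ × ℕ) : ℝ :=
  dist p.1 q.1 / 2 + Real.exp ((max p.2 q.2 : ℕ) : ℝ)

lemma acost_pos (p q : Γ × ℕ) : 0 < acost p q := by
  unfold acost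
  have := dist_nonneg (x := p.1) (y := q.1)
  have := Real.exp_pos (((max p.2 q.2 : ℕ) : ℝ))
  linarith

lemma acost_symm (p q : Γ × ℕ) : acost p q = acost q p := by
  unfold acost
  rw [dist_comm, max_comm]

lemma acost_triangle (p r q : Γ × ℕ) : acost p q ≤ acost p r + acost r q := by
  unfold acost
  have hd := dist_triangle p.1 r.1 q.1
  have hexp : Real.exp (((max p.2 q.2 : ℕ) : ℝ)) ≤
      Real.exp (((max p.2 r.2 : ℕ) : ℝ)) + Real.exp (((max r.2 q.2 : ℕ) : ℝ)) := by
    have key : max p.2 q.2 ≤ max (max p.2 r.2) (max r.2 q.2) :=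
      max_le (le_trans (le_max_left _ _) (le_max_left _ _))
        (le_trans (le_max_right _ _) (le_max_right _ _))
    rcases le_total (max p.2 r.2) (max r.2 q.2) with h | h
    · have h1 : max p.2 q.2 ≤ max r.2 q.2 := le_trans key (by simpa [max_eq_right h])
      have h2 : Real.exp (((max p.2 q.2 : ℕ) : ℝ)) ≤ Real.exp (((max r.2 q.2 : ℕ) : ℝ)) :=
        Real.exp_le_exp.mpr (by exact_mod_cast h1)
      linarith [Real.exp_pos (((max p.2 r.2 : ℕ) : ℝ))]
    · have h1 : max p.2 q.2 ≤ max p.2 r.2 := le_trans key (by simpa [max_eq_left h])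
      have h2 : Real.exp (((max p.2 q.2 : ℕ) : ℝ)) ≤ Real.exp (((max p.2 r.2 : ℕ) : ℝ)) :=
        Real.exp_le_exp.mpr (by exact_mod_cast h1)
      linarith [Real.exp_pos (((max r.2 q.2 : ℕ) : ℝ))]
  linarith

/-- The comparison function: `ψ(p,q) = 2 log(d(x,y)/2 + e^{max(m,n)}) - m - n`. -/
noncomputable def psi (p q : Γ × ℕ) : ℝ :=
  2 * Real.log (acost p q) - p.2 - q.2

lemma le_log_acost (p q : Γ × ℕ) :
    ((max p.2 q.2 : ℕ) : ℝ) ≤ Real.log (acost p q) := by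
  rw [Real.le_log_iff_exp_le (acost_pos p q)]
  unfold acost
  have := dist_nonneg (x := p.1) (y := q.1)
  linarith

lemma psi_nonneg (p q : Γ × ℕ) : 0 ≤ psi p q := by
  have h := le_log_acost p q
  have h1 : (p.2 : ℝ) ≤ ((max p.2 q.2 : ℕ) : ℝ) := by exact_mod_cast le_max_left p.2 q.2
  have h2 : (q.2 : ℝ) ≤ ((max p.2 q.2 : ℕ) : ℝ) := by exact_mod_cast le_max_right p.2 q.2
  unfold psi
  linarith

lemma psi_self (q : Γ × ℕ) : psi q q = 0 := by
  unfold psi acost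
  simp [dist_self, Real.log_exp]
  ring

lemma psi_vert (p r q : Γ × ℕ) (h1 : p.1 = r.1)
    (h2 : r.2 = p.2 + 1 ∨ p.2 = r.2 + 1) : psi p q ≤ 1 + psi r q := by
  have hd : dist p.1 q.1 = dist r.1 q.1 := by rw [h1]
  rcases h2 with h | h
  · have hm : max p.2 q.2 ≤ max r.2 q.2 := max_le_max (by omega) le_rfl
    have hlog : Real.log (acost p q) ≤ Real.log (acost r q) := by
      apply Real.log_le_log (acost_pos p q)
      unfold acost
      rw [hd]
      have : Real.exp (((max p.2 q.2 : ℕ) : ℝ)) ≤ Real.exp (((max r.2 q.2 : ℕ) : ℝ)) :=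
        Real.exp_le_exp.mpr (by exact_mod_cast hm)
      linarith
    have hc : (r.2 : ℝ) = (p.2 : ℝ) + 1 := by exact_mod_cast h
    unfold psi
    linarith
  · have hm : ((max p.2 q.2 : ℕ) : ℝ) ≤ ((max r.2 q.2 : ℕ) : ℝ) + 1 := by
      have : max p.2 q.2 ≤ max r.2 q.2 + 1 := by omega
      exact_mod_cast this
    have hexp : Real.exp (((max p.2 q.2 : ℕ) : ℝ)) ≤
        Real.exp 1 * Real.exp (((max r.2 q.2 : ℕ) : ℝ)) := by
      rw [← Real.exp_add]
      exact Real.exp_le_exp.mpr (by linarith)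
    have he1 : (1 : ℝ) ≤ Real.exp 1 := by
      linarith [Real.add_one_le_exp (1 : ℝ)]
    have hA : acost p q ≤ Real.exp 1 * acost r q := by
      unfold acost
      rw [hd]
      have hdn : (0 : ℝ) ≤ dist r.1 q.1 := dist_nonneg
      nlinarith [Real.exp_pos (((max r.2 q.2 : ℕ) : ℝ))]
    have hlog : Real.log (acost p q) ≤ 1 + Real.log (acost r q) := by
      calc Real.log (acost p q) ≤ Real.log (Real.exp 1 * acost r q) :=
            Real.log_le_log (acost_pos p q) hA
        _ = 1 + Real.log (acost r q) := by
            rw [Real.log_mul (Real.exp_ne_zero 1) (ne_of_gt (acost_pos r q)), Real.log_exp]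
    have hc : (p.2 : ℝ) = (r.2 : ℝ) + 1 := by exact_mod_cast h
    unfold psi
    linarith

lemma log_add_le {A c : ℝ} (hA : 0 < A) (hc : 0 ≤ c) :
    Real.log (A + c) ≤ Real.log A + c / A := by
  have h1 : Real.log ((A + c) / A) ≤ (A + c) / A - 1 :=
    Real.log_le_sub_one_of_pos (by positivity)
  rw [Real.log_div (by linarith) (ne_of_gt hA)] at h1
  have h2 : (A + c) / A - 1 = c / A := by field_simp; ring
  rw [h2] at h1
  have h3 : c / A ≤ c / A := le_rfl
  linarith

lemma psi_horiz (p r q : Γ × ℕ) (h : p.2 = r.2) :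
    psi p q ≤ Real.exp (-(p.2 : ℝ)) * dist p.1 r.1 + psi r q := by
  have hmax : max p.2 q.2 = max r.2 q.2 := by rw [h]
  have htri : dist p.1 q.1 ≤ dist p.1 r.1 + dist r.1 q.1 := dist_triangle p.1 r.1 q.1
  have hA : acost p q ≤ acost r q + dist p.1 r.1 / 2 := by
    unfold acost
    rw [hmax]
    linarith
  have hlog1 : Real.log (acost p q) ≤ Real.log (acost r q + dist p.1 r.1 / 2) :=
    Real.log_le_log (acost_pos p q) hA
  have hlog2 : Real.log (acost r q + dist p.1 r.1 / 2) ≤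
      Real.log (acost r q) + (dist p.1 r.1 / 2) / acost r q :=
    log_add_le (acost_pos r q) (by positivity)
  have hexp_le : Real.exp ((r.2 : ℝ)) ≤ acost r q := by
    unfold acost
    have : Real.exp ((r.2 : ℝ)) ≤ Real.exp (((max r.2 q.2 : ℕ) : ℝ)) :=
      Real.exp_le_exp.mpr (by exact_mod_cast le_max_left r.2 q.2)
    linarith [dist_nonneg (x := r.1) (y := q.1)]
  have hdiv : (dist p.1 r.1 / 2) / acost r q ≤ Real.exp (-(p.2 : ℝ)) * dist p.1 r.1 / 2 := by
    have h2 : (dist p.1 r.1 / 2) / acost r q ≤ (dist p.1 r.1 / 2) / Real.exp ((r.2 : ℝ)) :=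
      div_le_div_of_nonneg_left (by positivity) (Real.exp_pos _) hexp_le
    have h3 : (dist p.1 r.1 / 2) / Real.exp ((r.2 : ℝ)) =
        Real.exp (-(r.2 : ℝ)) * dist p.1 r.1 / 2 := by
      rw [Real.exp_neg]
      ring
    have h4 : (p.2 : ℝ) = (r.2 : ℝ) := by exact_mod_cast h
    rw [h4, ← h3]
    exact h2
  have h4 : (p.2 : ℝ) = (r.2 : ℝ) := by exact_mod_cast h
  unfold psi
  linarith

lemma edge_bound (p r q : Γ × ℕ) :
    ENNReal.ofReal (psi p q) ≤ horoballWeight Γ p r + ENNReal.ofReal (psi r q) := by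
  unfold horoballWeight
  split_ifs with h1 h2
  · have hreal := psi_vert p r q h1.1 h1.2
    calc ENNReal.ofReal (psi p q) ≤ ENNReal.ofReal (1 + psi r q) :=
          ENNReal.ofReal_le_ofReal hreal
      _ = 1 + ENNReal.ofReal (psi r q) := by
          rw [ENNReal.ofReal_add zero_le_one (psi_nonneg r q), ENNReal.ofReal_one]
  · have hreal := psi_horiz p r q h2.1
    calc ENNReal.ofReal (psi p q)
        ≤ ENNReal.ofReal (Real.exp (-(p.2 : ℝ)) * dist p.1 r.1 + psi r q) :=
          ENNReal.ofReal_le_ofReal hreal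
      _ = ENNReal.ofReal (Real.exp (-(p.2 : ℝ)) * dist p.1 r.1) + ENNReal.ofReal (psi r q) :=
          ENNReal.ofReal_add (by positivity) (psi_nonneg r q)
  · rw [top_add]
    exact le_top

lemma chain_lower : ∀ (l : List (Γ × ℕ)) (p q : Γ × ℕ), l.head? = some p →
    l.getLast? = some q → ENNReal.ofReal (psi p q) ≤ chainCost (horoballWeight Γ) l := by
  intro l
  induction l with
  | nil => intro p q h _; simp at h
  | cons u t ih =>
    intro p q hh hl
    have hup : u = p := by simpa using hh
    subst hup
    rcases t with _ | ⟨v, t'⟩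
    · have huq : u = q := by simpa using hl
      subst huq
      simp [chainCost, psi_self]
    · rw [List.getLast?_cons_cons] at hl
      have hv := ih v q rfl hl
      have hcc : chainCost (horoballWeight Γ) (u :: v :: t') =
          horoballWeight Γ u v + chainCost (horoballWeight Γ) (v :: t') := by
        simp [chainCost]
      rw [hcc]
      calc ENNReal.ofReal (psi u q) ≤ horoballWeight Γ u v + ENNReal.ofReal (psi v q) :=
            edge_bound u v q
        _ ≤ horoballWeight Γ u v + chainCost (horoballWeight Γ) (v :: t') :=
            add_le_add_right hv _

lemma pathDist_lower (p q : Γ × ℕ) :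
    ENNReal.ofReal (psi p q) ≤ pathDist (horoballWeight Γ) p q := by
  unfold pathDist
  exact le_iInf fun l => le_iInf fun hh => le_iInf fun hl => chain_lower l p q hh hl

/-- Descending vertical chain from `(y, n+j)` down to `(y, n)`. -/
def descend (y : Γ) (n : ℕ) : ℕ → List (Γ × ℕ)
  | 0 => [(y, n)]
  | (j + 1) => (y, n + j + 1) :: descend y n j

lemma descend_cons (y : Γ) (n : ℕ) : ∀ j, ∃ t, descend y n j = (y, n + j) :: t
  | 0 => ⟨[], rfl⟩
  | (j + 1) => ⟨descend y n j, rfl⟩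

lemma descend_getLast? (y : Γ) (n : ℕ) : ∀ j, (descend y n j).getLast? = some (y, n)
  | 0 => rfl
  | (j + 1) => by
    obtain ⟨t, ht⟩ := descend_cons y n j
    show ((y, n + j + 1) :: descend y n j).getLast? = _
    rw [ht, List.getLast?_cons_cons, ← ht, descend_getLast? y n j]

lemma vert_weight (y : Γ) (k : ℕ) : horoballWeight Γ (y, k + 1) (y, k) = 1 := by
  unfold horoballWeight
  rw [if_pos ⟨rfl, Or.inr rfl⟩]

lemma descend_cost (y : Γ) (n : ℕ) : ∀ (j : ℕ) (u : Γ × ℕ),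
    chainCost (horoballWeight Γ) (u :: descend y n j) =
      horoballWeight Γ u (y, n + j) + j := by
  intro j
  induction j with
  | zero => intro u; simp [descend, chainCost]
  | succ j ih =>
    intro u
    show chainCost (horoballWeight Γ) (u :: (y, n + j + 1) :: descend y n j) = _
    have hcc : chainCost (horoballWeight Γ) (u :: (y, n + j + 1) :: descend y n j) =
        horoballWeight Γ u (y, n + j + 1) +
          chainCost (horoballWeight Γ) ((y, n + j + 1) :: descend y n j) := by
      simp [chainCost]
    rw [hcc, ih, vert_weight]
    have : n + j + 1 = n + (j + 1) := by omega
    rw [this]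
    push_cast
    ring

lemma descend_cost' (y : Γ) (n : ℕ) : ∀ j, chainCost (horoballWeight Γ) (descend y n j) = j
  | 0 => by simp [descend, chainCost]
  | (j + 1) => by
    show chainCost (horoballWeight Γ) ((y, n + j + 1) :: descend y n j) = _
    rw [descend_cost y n j, vert_weight]
    push_cast
    ring

/-- Ascending vertical chain from `(x, m)` up to `(x, m+i)`. -/
def ascend (x : Γ) : ℕ → ℕ → List (Γ × ℕ)
  | 0, m => [(x, m)]
  | (i + 1), m => (x, m) :: ascend x i (m + 1)

lemma ascend_cons (x : Γ) : ∀ i m, ∃ t, ascend x i m = (x, m) :: t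
  | 0, _ => ⟨[], rfl⟩
  | (i + 1), m => ⟨ascend x i (m + 1), rfl⟩

lemma ascend_getLast? (x : Γ) : ∀ i m, (ascend x i m).getLast? = some (x, m + i)
  | 0, m => by simp [ascend]
  | (i + 1), m => by
    obtain ⟨t, ht⟩ := ascend_cons x i (m + 1)
    show ((x, m) :: ascend x i (m + 1)).getLast? = _
    rw [ht, List.getLast?_cons_cons, ← ht, ascend_getLast? x i (m + 1)]
    have : m + 1 + i = m + (i + 1) := by omega
    rw [this]

lemma vert_weight' (x : Γ) (k : ℕ) : horoballWeight Γ (x, k) (x, k + 1) = 1 := by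
  unfold horoballWeight
  rw [if_pos ⟨rfl, Or.inl rfl⟩]

lemma ascend_append (x : Γ) (l : List (Γ × ℕ)) : ∀ i m,
    chainCost (horoballWeight Γ) (ascend x i m ++ l) =
      i + chainCost (horoballWeight Γ) ((x, m + i) :: l)
  | 0, m => by simp [ascend, chainCost]
  | (i + 1), m => by
    obtain ⟨t, ht⟩ := ascend_cons x i (m + 1)
    show chainCost (horoballWeight Γ) ((x, m) :: (ascend x i (m + 1) ++ l)) = _
    rw [ht]
    have hcc : chainCost (horoballWeight Γ) ((x, m) :: (((x, m + 1) :: t) ++ l)) =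
        horoballWeight Γ (x, m) (x, m + 1) +
          chainCost (horoballWeight Γ) (((x, m + 1) :: t) ++ l) := by
      simp [chainCost]
    rw [hcc, ← ht, ascend_append x l i (m + 1), vert_weight']
    have : m + 1 + i = m + (i + 1) := by omega
    rw [this]
    push_cast
    ring

lemma pathDist_le_chain {p q : Γ × ℕ} (l : List (Γ × ℕ)) (hh : l.head? = some p)
    (hl : l.getLast? = some q) :
    pathDist (horoballWeight Γ) p q ≤ chainCost (horoballWeight Γ) l := by
  unfold pathDist
  exact iInf_le_of_le l (iInf_le_of_le hh (iInf_le_of_le hl le_rfl))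

lemma pathDist_upper (p q : Γ × ℕ) :
    pathDist (horoballWeight Γ) p q ≤ ENNReal.ofReal (psi p q + 5) := by
  obtain ⟨x, m⟩ := p
  obtain ⟨y, n⟩ := q
  by_cases hxy : x = y
  · subst hxy
    have hpsi : psi (x, m) (x, n) = 2 * ((max m n : ℕ) : ℝ) - m - n := by
      unfold psi acost
      simp [dist_self, Real.log_exp]
    rcases le_total m n with h | h
    · obtain ⟨t, ht⟩ := ascend_cons x (n - m) m
      have hh : (ascend x (n - m) m).head? = some (x, m) := by rw [ht]; rfl
      have hl : (ascend x (n - m) m).getLast? = some (x, n) := by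
        rw [ascend_getLast?]
        have : m + (n - m) = n := by omega
        rw [this]
      have hcost : chainCost (horoballWeight Γ) (ascend x (n - m) m) = (n - m : ℕ) := by
        have h2 := ascend_append x [] (n - m) m
        simpa [chainCost] using h2
      refine le_trans (pathDist_le_chain _ hh hl) ?_
      rw [hcost, ← ENNReal.ofReal_natCast]
      apply ENNReal.ofReal_le_ofReal
      rw [hpsi]
      have hc : ((n - m : ℕ) : ℝ) = (n : ℝ) - m := by
        push_cast [h]
        ring
      have hmax : ((max m n : ℕ) : ℝ) = (n : ℝ) := by
        rw [max_eq_right h]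
      rw [hc, hmax]
      linarith
    · obtain ⟨t, ht⟩ := descend_cons x n (m - n)
      have hh : (descend x n (m - n)).head? = some (x, m) := by
        rw [ht]
        have : n + (m - n) = m := by omega
        rw [this]
        rfl
      have hl : (descend x n (m - n)).getLast? = some (x, n) := descend_getLast? x n _
      have hcost : chainCost (horoballWeight Γ) (descend x n (m - n)) = (m - n : ℕ) :=
        descend_cost' x n _
      refine le_trans (pathDist_le_chain _ hh hl) ?_
      rw [hcost, ← ENNReal.ofReal_natCast]
      apply ENNReal.ofReal_le_ofReal
      rw [hpsi]
      have hc : ((m - n : ℕ) : ℝ) = (m : ℝ) - n := by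
        push_cast [h]
        ring
      have hmax : ((max m n : ℕ) : ℝ) = (m : ℝ) := by
        rw [max_eq_left h]
      rw [hc, hmax]
      linarith
  · -- horizontal case
    have hd0 : 0 ≤ dist x y := dist_nonneg
    set μ := max m n with hμ
    set tq := dist x y * Real.exp (-(μ : ℝ)) with htq
    have ht0 : 0 ≤ tq := by positivity
    set j := ⌈Real.log (1 + tq)⌉₊ with hj
    set K := μ + j with hKdef
    have hmK : m ≤ K := le_trans (le_max_left m n) (Nat.le_add_right _ _)
    have hnK : n ≤ K := le_trans (le_max_right m n) (Nat.le_add_right _ _)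
    set l := ascend x (K - m) m ++ descend y n (K - n) with hldef
    obtain ⟨t₁, ht₁⟩ := ascend_cons x (K - m) m
    have hh : l.head? = some (x, m) := by rw [hldef, ht₁]; rfl
    have hlast : l.getLast? = some (y, n) := by
      rw [hldef]
      rw [List.getLast?_append_of_ne_nil]
      · exact descend_getLast? y n _
      · obtain ⟨t₂, ht₂⟩ := descend_cons y n (K - n)
        rw [ht₂]
        simp
    have hwK : horoballWeight Γ (x, K) (y, K) =
        ENNReal.ofReal (Real.exp (-(K : ℝ)) * dist x y) := by
      unfold horoballWeight
      rw [if_neg, if_pos ⟨rfl, hxy⟩]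
      rintro ⟨h1, -⟩
      exact hxy h1
    have hcost : chainCost (horoballWeight Γ) l =
        ((K - m : ℕ) : ℝ≥0∞) +
          (ENNReal.ofReal (Real.exp (-(K : ℝ)) * dist x y) + ((K - n : ℕ) : ℝ≥0∞)) := by
      rw [hldef, ascend_append]
      have h1 : m + (K - m) = K := by omega
      rw [h1, descend_cost]
      have h2 : n + (K - n) = K := by omega
      rw [h2, hwK]
    refine le_trans (pathDist_le_chain l hh hlast) ?_
    rw [hcost]
    rw [← ENNReal.ofReal_natCast (K - m), ← ENNReal.ofReal_natCast (K - n)]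
    rw [← ENNReal.ofReal_add (by positivity) (Nat.cast_nonneg _)]
    rw [← ENNReal.ofReal_add (Nat.cast_nonneg _) (by positivity)]
    apply ENNReal.ofReal_le_ofReal
    -- the real inequality
    have hc1 : ((K - m : ℕ) : ℝ) = (K : ℝ) - m := by push_cast [hmK]; ring
    have hc2 : ((K - n : ℕ) : ℝ) = (K : ℝ) - n := by push_cast [hnK]; ring
    have hKr : (K : ℝ) = (μ : ℝ) + j := by
      rw [hKdef]
      push_cast
      ring
    have hlog1 : Real.log (1 + tq) ≤ (j : ℝ) := Nat.le_ceil _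
    have hlog0 : 0 ≤ Real.log (1 + tq) := Real.log_nonneg (by linarith)
    have hlog2 : (j : ℝ) < Real.log (1 + tq) + 1 := Nat.ceil_lt_add_one hlog0
    have hexpK : Real.exp (-(K : ℝ)) * dist x y ≤ 1 := by
      have e1 : Real.exp (-(K : ℝ)) = Real.exp (-(μ : ℝ)) * Real.exp (-(j : ℝ)) := by
        rw [← Real.exp_add]
        congr 1
        rw [hKr]
        ring
      have e2 : Real.exp (-(j : ℝ)) ≤ Real.exp (-(Real.log (1 + tq))) :=
        Real.exp_le_exp.mpr (by linarith)
      have e3 : Real.exp (-(Real.log (1 + tq))) = (1 + tq)⁻¹ := by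
        rw [Real.exp_neg, Real.exp_log (by linarith)]
      calc Real.exp (-(K : ℝ)) * dist x y = tq * Real.exp (-(j : ℝ)) := by
            rw [e1, htq]
            ring
        _ ≤ tq * (1 + tq)⁻¹ := mul_le_mul_of_nonneg_left (e2.trans_eq e3) ht0
        _ ≤ 1 := by
            rw [← div_eq_mul_inv]
            apply div_le_one_of_le₀ (by linarith) (by linarith)
    have hpsi : psi (x, m) (y, n) = 2 * (μ : ℝ) + 2 * Real.log (1 + tq / 2) - m - n := by
      unfold psi acost
      have heq : dist x y / 2 + Real.exp (((max m n : ℕ) : ℝ)) =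
          Real.exp ((μ : ℝ)) * (1 + tq / 2) := by
        rw [htq, hμ]
        have hee : Real.exp (((max m n : ℕ) : ℝ)) * Real.exp (-((max m n : ℕ) : ℝ)) = 1 := by
          rw [← Real.exp_add]
          simp
        nlinarith [hee]
      rw [heq, Real.log_mul (Real.exp_ne_zero _) (by positivity), Real.log_exp]
      ring
    have hlog3 : Real.log (1 + tq) ≤ Real.log 2 + Real.log (1 + tq / 2) := by
      rw [← Real.log_mul two_ne_zero (by positivity)]
      apply Real.log_le_log (by linarith)
      linarith
    have hlog4 : Real.log 2 ≤ 1 := by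
      linarith [Real.log_le_sub_one_of_pos (show (0 : ℝ) < 2 by norm_num)]
    rw [hc1, hc2, hpsi]
    linarith

lemma psi_four (p q r s : Γ × ℕ) :
    psi p q + psi r s ≤ max (psi p r + psi q s) (psi p s + psi q r) + 2 * Real.log 4 := by
  have hap : 0 < acost p r := acost_pos p r
  have hbp : 0 < acost q s := acost_pos q s
  have hcp : 0 < acost p s := acost_pos p s
  have hep : 0 < acost q r := acost_pos q r
  have hpq : 0 < acost p q := acost_pos p q
  have hrs : 0 < acost r s := acost_pos r s
  have t1 : acost p q ≤ acost p r + acost q r := by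
    have h := acost_triangle p r q
    rw [acost_symm r q] at h
    exact h
  have t2 : acost p q ≤ acost p s + acost q s := by
    have h := acost_triangle p s q
    rw [acost_symm s q] at h
    exact h
  have t3 : acost r s ≤ acost p r + acost p s := by
    have h := acost_triangle r p s
    rw [acost_symm r p] at h
    exact h
  have t4 : acost r s ≤ acost q r + acost q s := by
    have h := acost_triangle r q s
    rw [acost_symm r q] at h
    exact h
  have hprod : acost p q * acost r s ≤
      4 * max (acost p r * acost q s) (acost p s * acost q r) := by
    have hmab : acost p r * acost q s ≤ max (acost p r * acost q s) (acost p s * acost q r) :=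
      le_max_left _ _
    have hmce : acost p s * acost q r ≤ max (acost p r * acost q s) (acost p s * acost q r) :=
      le_max_right _ _
    rcases le_total (min (acost p r) (acost q s)) (min (acost p s) (acost q r)) with h | h
    · rcases le_total (acost p r) (acost q s) with h' | h'
      · -- acost p r is the min of all four
        have h'' : acost p r ≤ min (acost p s) (acost q r) := by
          rw [min_eq_left h'] at h
          exact h
        have hac : acost p r ≤ acost p s := le_trans h'' (min_le_left _ _)
        have hae : acost p r ≤ acost q r := le_trans h'' (min_le_right _ _)
        have step : acost p q * acost r s ≤
            (acost p r + acost q r) * (acost p r + acost p s) :=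
          mul_le_mul t1 t3 hrs.le (by positivity)
        nlinarith
      · -- acost q s is the min
        have h'' : acost q s ≤ min (acost p s) (acost q r) := by
          rw [min_eq_right h'] at h
          exact h
        have hbc : acost q s ≤ acost p s := le_trans h'' (min_le_left _ _)
        have hbe : acost q s ≤ acost q r := le_trans h'' (min_le_right _ _)
        have step : acost p q * acost r s ≤
            (acost p s + acost q s) * (acost q r + acost q s) :=
          mul_le_mul t2 t4 hrs.le (by positivity)
        nlinarith
    · rcases le_total (acost p s) (acost q r) with h' | h'
      · -- acost p s is the min
        have h'' : acost p s ≤ min (acost p r) (acost q s) := by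
          rw [min_eq_left h'] at h
          exact h
        have hca : acost p s ≤ acost p r := le_trans h'' (min_le_left _ _)
        have hcb : acost p s ≤ acost q s := le_trans h'' (min_le_right _ _)
        have step : acost p q * acost r s ≤
            (acost p s + acost q s) * (acost p r + acost p s) :=
          mul_le_mul t2 t3 hrs.le (by positivity)
        nlinarith
      · -- acost q r is the min
        have h'' : acost q r ≤ min (acost p r) (acost q s) := by
          rw [min_eq_right h'] at h
          exact h
        have hea : acost q r ≤ acost p r := le_trans h'' (min_le_left _ _)
        have heb : acost q r ≤ acost q s := le_trans h'' (min_le_right _ _)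
        have step : acost p q * acost r s ≤
            (acost p r + acost q r) * (acost q r + acost q s) :=
          mul_le_mul t1 t4 hrs.le (by positivity)
        nlinarith
  have hmaxpos : 0 < max (acost p r * acost q s) (acost p s * acost q r) :=
    lt_max_iff.mpr (Or.inl (by positivity))
  have h1 : Real.log (acost p q * acost r s) ≤
      Real.log (4 * max (acost p r * acost q s) (acost p s * acost q r)) :=
    Real.log_le_log (by positivity) hprod
  rw [Real.log_mul (ne_of_gt hpq) (ne_of_gt hrs),
      Real.log_mul (by norm_num : (4 : ℝ) ≠ 0) (ne_of_gt hmaxpos)] at h1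
  have h2 : Real.log (max (acost p r * acost q s) (acost p s * acost q r)) =
      max (Real.log (acost p r * acost q s)) (Real.log (acost p s * acost q r)) := by
    rcases le_total (acost p r * acost q s) (acost p s * acost q r) with h | h
    · rw [max_eq_right h, max_eq_right (Real.log_le_log (by positivity) h)]
    · rw [max_eq_left h, max_eq_left (Real.log_le_log (by positivity) h)]
  rw [h2, Real.log_mul (ne_of_gt hap) (ne_of_gt hbp),
      Real.log_mul (ne_of_gt hcp) (ne_of_gt hep)] at h1
  rcases le_total (Real.log (acost p s) + Real.log (acost q r))
      (Real.log (acost p r) + Real.log (acost q s)) with h | h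
  · rw [max_eq_left h] at h1
    have h3 : psi p q + psi r s ≤ (psi p r + psi q s) + 2 * Real.log 4 := by
      unfold psi
      linarith
    exact h3.trans (add_le_add_left (le_max_left _ _) _)
  · rw [max_eq_right h] at h1
    have h3 : psi p q + psi r s ≤ (psi p s + psi q r) + 2 * Real.log 4 := by
      unfold psi
      linarith
    exact h3.trans (add_le_add_left (le_max_right _ _) _)

lemma ofReal_monotone : Monotone ENNReal.ofReal := fun _ _ h => ENNReal.ofReal_le_ofReal h

end HoroballProof

/-- for every `ε > 0` there is `δ' ≥ 0`, depending only on `ε`,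
such that for every `ε`-separated metric space `Γ` the combinatorial horoball
`H(Γ)` is `δ'`-hyperbolic (expressed via Gromov's four-point condition on the
path metric of `H(Γ)`). -/
theorem horoball_hyperbolic :
    ∀ ε : ℝ, 0 < ε → ∃ δ' : ℝ, 0 ≤ δ' ∧
      ∀ (Γ : Type) [inst : MetricSpace Γ],
        (∀ x y : Γ, x ≠ y → ε ≤ dist x y) →
        ∀ p q r s : Γ × ℕ,
          pathDist (horoballWeight Γ) p q + pathDist (horoballWeight Γ) r s ≤
            max (pathDist (horoballWeight Γ) p r + pathDist (horoballWeight Γ) q s)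
              (pathDist (horoballWeight Γ) p s + pathDist (horoballWeight Γ) q r) +
              ENNReal.ofReal (2 * δ') := by
  intro ε hε
  refine ⟨8, by norm_num, ?_⟩
  intro Γ inst hsep p q r s
  have hub_pq := HoroballProof.pathDist_upper p q
  have hub_rs := HoroballProof.pathDist_upper r s
  have hlow_pr := HoroballProof.pathDist_lower p r
  have hlow_qs := HoroballProof.pathDist_lower q s
  have hlow_ps := HoroballProof.pathDist_lower p s
  have hlow_qr := HoroballProof.pathDist_lower q r
  have hψ := HoroballProof.psi_four p q r s
  have hlog4 : Real.log 4 ≤ 3 := by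
    linarith [Real.log_le_sub_one_of_pos (show (0 : ℝ) < 4 by norm_num)]
  have hn1 := HoroballProof.psi_nonneg p q
  have hn2 := HoroballProof.psi_nonneg r s
  have hn3 := HoroballProof.psi_nonneg p r
  have hn4 := HoroballProof.psi_nonneg q s
  have hn5 := HoroballProof.psi_nonneg p s
  have hn6 := HoroballProof.psi_nonneg q r
  calc pathDist (horoballWeight Γ) p q + pathDist (horoballWeight Γ) r s
      ≤ ENNReal.ofReal (HoroballProof.psi p q + 5) +
          ENNReal.ofReal (HoroballProof.psi r s + 5) := add_le_add hub_pq hub_rs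
    _ = ENNReal.ofReal ((HoroballProof.psi p q + 5) + (HoroballProof.psi r s + 5)) :=
        (ENNReal.ofReal_add (by linarith) (by linarith)).symm
    _ ≤ ENNReal.ofReal (max (HoroballProof.psi p r + HoroballProof.psi q s)
          (HoroballProof.psi p s + HoroballProof.psi q r) + 2 * 8) :=
        ENNReal.ofReal_le_ofReal (by linarith)
    _ = max (ENNReal.ofReal (HoroballProof.psi p r + HoroballProof.psi q s))
          (ENNReal.ofReal (HoroballProof.psi p s + HoroballProof.psi q r)) +
          ENNReal.ofReal (2 * 8) := by
        rw [ENNReal.ofReal_add (le_max_iff.mpr (Or.inl (by linarith))) (by norm_num)]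
        rw [HoroballProof.ofReal_monotone.map_max]
    _ ≤ max (pathDist (horoballWeight Γ) p r + pathDist (horoballWeight Γ) q s)
          (pathDist (horoballWeight Γ) p s + pathDist (horoballWeight Γ) q r) +
          ENNReal.ofReal (2 * 8) := by
        apply add_le_add_left
        apply max_le_max
        · rw [ENNReal.ofReal_add (by linarith) (by linarith)]
          exact add_le_add hlow_pr hlow_qs
        · rw [ENNReal.ofReal_add (by linarith) (by linarith)]
          exact add_le_add hlow_ps hlow_qr
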